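/- Let X_1 and X_2 be association schemes and let t ∈ ℕ. Then the tensor product X_1 ⊗ X_2 is extensible to height t if and only if both X_1 and X_2 are extensible to height t. -/

import Mathlib

/-- The first factor tuple `(x_0, ..., x_m, z)` extracted from
`w = (x_0, ..., x_m, y_0, ..., y_n)`. -/
def fstTup {Q : Type} (m n : ℕ) (w : Fin (m + n + 2) → Q) (z : Q) :
    Fin (m + 2) → Q :=
  Fin.snoc (fun i : Fin (m + 1) => w (Fin.castLE (by omega) i)) z

/-- The second factor tuple `(z, y_0, ..., y_n)` extracted from
`w = (x_0, ..., x_m, y_0, ..., y_n)`. -/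
def sndTup {Q : Type} (m n : ℕ) (w : Fin (m + n + 2) → Q) (z : Q) :
    Fin (n + 2) → Q :=
  Fin.cons z (fun i : Fin (n + 1) => w ⟨m + 1 + i.1, by have := i.isLt; omega⟩)

/-- A height `t` presuperscheme on `Q`: a family of partitions `Γ n` of
`Q^(n+2)` (for `n ≤ t`) satisfying the identity (P1), projection (P2),
coordinate-permutation invariance (P3) and intersection (P4) properties. -/
structure PreScheme (Q : Type) [Fintype Q] (t : ℕ) where
  Γ : ∀ n : ℕ, Set (Set (Fin (n + 2) → Q))
  nonempty : ∀ n ≤ t, ∀ C ∈ Γ n, C.Nonempty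
  partition : ∀ n ≤ t, ∀ x : Fin (n + 2) → Q, ∃! C, C ∈ Γ n ∧ x ∈ C
  identity : {x : Fin 2 → Q | x 0 = x 1} ∈ Γ 0
  proj : ∀ n : ℕ, n + 1 ≤ t → ∀ C ∈ Γ (n + 1),
    {y : Fin (n + 2) → Q | ∃ x ∈ C, y = x ∘ Fin.castSucc} ∈ Γ n
  invariant : ∀ n ≤ t, ∀ C ∈ Γ n, ∀ τ : Equiv.Perm (Fin (n + 2)),
    {x : Fin (n + 2) → Q | x ∘ τ ∈ C} ∈ Γ n
  inter : ∀ m n : ℕ, m + n ≤ t → ∀ Ci ∈ Γ m, ∀ Cj ∈ Γ n, ∀ Ck ∈ Γ (m + n),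
    ∀ w ∈ Ck, ∀ w' ∈ Ck,
      {z : Q | fstTup m n w z ∈ Ci ∧ sndTup m n w z ∈ Cj}.ncard =
      {z : Q | fstTup m n w' z ∈ Ci ∧ sndTup m n w' z ∈ Cj}.ncard

/-- The relation on `Q × Q` viewed as a set of 2-tuples `Fin 2 → Q`. -/
def pairsToFun {Q : Type} (D : Set (Q × Q)) : Set (Fin 2 → Q) :=
  {x | (x 0, x 1) ∈ D}

/-- An association scheme `(Q, Γ0)` is extensible to height `t` if it is
associated to some height `t` presuperscheme. -/
def Extensible (Q : Type) [Fintype Q] (Γ0 : Set (Set (Q × Q))) (t : ℕ) : Prop :=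
  ∃ P : PreScheme Q t, P.Γ 0 = pairsToFun '' Γ0

/-- `Γ` is (the partition of) an association scheme on `Q`. -/
def IsAssocScheme (Q : Type) [Fintype Q] (Γ : Set (Set (Q × Q))) : Prop :=
  (∀ C ∈ Γ, C.Nonempty) ∧
  (∀ p : Q × Q, ∃! C, C ∈ Γ ∧ p ∈ C) ∧
  {p : Q × Q | p.1 = p.2} ∈ Γ ∧
  (∀ C ∈ Γ, {p : Q × Q | (p.2, p.1) ∈ C} ∈ Γ) ∧
  (∀ Ci ∈ Γ, ∀ Cj ∈ Γ, ∀ Ck ∈ Γ, ∀ p ∈ Ck, ∀ q ∈ Ck,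
    {z : Q | (p.1, z) ∈ Ci ∧ (z, p.2) ∈ Cj}.ncard =
    {z : Q | (q.1, z) ∈ Ci ∧ (z, q.2) ∈ Cj}.ncard)

/-- The tensor product partition `Γ₁ ⊗ Γ₂` on `(Q₁ × Q₂) × (Q₁ × Q₂)`. -/
def tensorΓ {Q₁ Q₂ : Type} (Γ₁ : Set (Set (Q₁ × Q₁))) (Γ₂ : Set (Set (Q₂ × Q₂))) :
    Set (Set ((Q₁ × Q₂) × (Q₁ × Q₂))) :=
  {S | ∃ C ∈ Γ₁, ∃ D ∈ Γ₂,
    S = {p | (p.1.1, p.2.1) ∈ C ∧ (p.1.2, p.2.2) ∈ D}}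

section Helpers

variable {Q Q' : Type}

lemma comp_fstTup (f : Q → Q') (m n : ℕ) (w : Fin (m + n + 2) → Q) (z : Q) :
    f ∘ fstTup m n w z = fstTup m n (f ∘ w) (f z) := by
  unfold fstTup
  rw [Fin.comp_snoc]
  rfl

lemma comp_sndTup (f : Q → Q') (m n : ℕ) (w : Fin (m + n + 2) → Q) (z : Q) :
    f ∘ sndTup m n w z = sndTup m n (f ∘ w) (f z) := by
  unfold sndTup
  rw [Fin.comp_cons]
  rfl

lemma fstTup_zero (m : ℕ) (w : Fin (m + 2) → Q) (z : Q) :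
    fstTup m 0 w z = Fin.snoc (Fin.init w) z := by
  unfold fstTup
  congr 1

lemma sndTup_zero (m : ℕ) (w : Fin (m + 2) → Q) (z : Q) :
    sndTup m 0 w z = Fin.cons z (fun _ => w (Fin.last (m + 1))) := by
  funext k
  unfold sndTup
  refine Fin.cases ?_ ?_ k
  · simp
  · intro i
    simp only [Fin.cons_succ]
    congr 1
    apply Fin.ext
    have := i.isLt
    simp [Fin.last]

lemma fstTup_apply_zero (m n : ℕ) (w : Fin (m + n + 2) → Q) (z : Q) :
    fstTup m n w z 0 = w 0 := by
  unfold fstTup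
  rw [show (0 : Fin (m + 2)) = Fin.castSucc 0 by simp]
  rw [Fin.snoc_castSucc]
  congr 1

lemma fstTup_apply_last (m n : ℕ) (w : Fin (m + n + 2) → Q) (z : Q) :
    fstTup m n w z (Fin.last (m + 1)) = z := by
  unfold fstTup
  exact Fin.snoc_last _ _

lemma ncard_sprod {A B : Type} (s : Set A) (t : Set B) :
    (s ×ˢ t).ncard = s.ncard * t.ncard := by
  rw [← Nat.card_coe_set_eq, ← Nat.card_coe_set_eq, ← Nat.card_coe_set_eq,
    Nat.card_congr (Equiv.Set.prod s t), Nat.card_prod]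

end Helpers
section SchemeLemmas

variable {Q : Type} [Fintype Q] {t : ℕ}

lemma PreScheme.class_eq (P : PreScheme Q t) {n : ℕ} (hn : n ≤ t)
    {C C' : Set (Fin (n + 2) → Q)} (hC : C ∈ P.Γ n) (hC' : C' ∈ P.Γ n)
    {x : Fin (n + 2) → Q} (h : x ∈ C) (h' : x ∈ C') : C = C' := by
  obtain ⟨D, -, hu⟩ := P.partition n hn x
  rw [hu C ⟨hC, h⟩, hu C' ⟨hC', h'⟩]

lemma PreScheme.exists_class (P : PreScheme Q t) {n : ℕ} (hn : n ≤ t)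
    (x : Fin (n + 2) → Q) : ∃ C ∈ P.Γ n, x ∈ C := by
  obtain ⟨C, ⟨h1, h2⟩, -⟩ := P.partition n hn x
  exact ⟨C, h1, h2⟩

lemma PreScheme.trunc (P : PreScheme Q t) :
    ∀ n, n ≤ t → ∀ C ∈ P.Γ n, ∀ w ∈ C, ∀ w' ∈ C,
    ∃ E ∈ P.Γ 0, (w ∘ Fin.castLE (by omega)) ∈ E ∧
      (w' ∘ Fin.castLE (by omega)) ∈ E := by
  intro n
  induction n with
  | zero =>
    intro _ C hC w hw w' hw'
    have hid : ∀ v : Fin 2 → Q, v ∘ Fin.castLE (by omega : 2 ≤ 0 + 2) = v := by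
      intro v; funext i; exact congrArg v (Fin.ext rfl)
    exact ⟨C, hC, by rw [hid]; exact hw, by rw [hid]; exact hw'⟩
  | succ n ih =>
    intro h C hC w hw w' hw'
    obtain ⟨E, hE, h1, h2⟩ := ih (by omega) _ (P.proj n h C hC)
      (w ∘ Fin.castSucc) ⟨w, hw, rfl⟩ (w' ∘ Fin.castSucc) ⟨w', hw', rfl⟩
    have hcomp : ∀ v : Fin (n + 3) → Q,
        (v ∘ Fin.castSucc) ∘ Fin.castLE (by omega : 2 ≤ n + 2)
          = v ∘ Fin.castLE (by omega : 2 ≤ n + 3) := by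
      intro v; funext i; exact congrArg v (Fin.ext rfl)
    rw [hcomp] at h1
    rw [hcomp] at h2
    exact ⟨E, hE, h1, h2⟩

lemma PreScheme.pair (P : PreScheme Q t) {n : ℕ} (hn : n ≤ t)
    {C : Set (Fin (n + 2) → Q)} (hC : C ∈ P.Γ n)
    {w w' : Fin (n + 2) → Q} (hw : w ∈ C) (hw' : w' ∈ C)
    {i j : Fin (n + 2)} (hij : i ≠ j) :
    ∃ E ∈ P.Γ 0, ![w i, w j] ∈ E ∧ ![w' i, w' j] ∈ E := by
  classical
  set τ₁ := Equiv.swap (0 : Fin (n + 2)) i with hτ₁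
  set j'' := τ₁.symm j with hj''
  set τ₂ := Equiv.swap (1 : Fin (n + 2)) j'' with hτ₂
  set σ := τ₂.trans τ₁ with hσ
  have hj''0 : j'' ≠ 0 := by
    intro h
    apply hij
    have : j = τ₁ 0 := by rw [← h, hj'']; simp
    rw [this, hτ₁, Equiv.swap_apply_left]
  have hσ0 : σ 0 = i := by
    have h20 : τ₂ 0 = 0 := by
      rw [hτ₂]
      exact Equiv.swap_apply_of_ne_of_ne (by exact Fin.zero_ne_one) (Ne.symm hj''0)
    show τ₁ (τ₂ 0) = i
    rw [h20, hτ₁, Equiv.swap_apply_left]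
  have hσ1 : σ 1 = j := by
    show τ₁ (τ₂ 1) = j
    rw [hτ₂, Equiv.swap_apply_left, hj'']
    simp
  have hCσ : {x : Fin (n + 2) → Q | x ∘ (σ⁻¹ : Equiv.Perm (Fin (n + 2))) ∈ C} ∈ P.Γ n :=
    P.invariant n hn C hC σ⁻¹
  have hmem : ∀ v : Fin (n + 2) → Q, v ∈ C →
      (v ∘ σ) ∈ {x : Fin (n + 2) → Q | x ∘ (σ⁻¹ : Equiv.Perm (Fin (n + 2))) ∈ C} := by
    intro v hv
    show (v ∘ σ) ∘ (σ⁻¹ : Equiv.Perm (Fin (n + 2))) ∈ C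
    have : (v ∘ σ) ∘ (σ⁻¹ : Equiv.Perm (Fin (n + 2))) = v := by
      funext k; simp
    rw [this]; exact hv
  obtain ⟨E, hE, h1, h2⟩ := P.trunc n hn _ hCσ (w ∘ σ) (hmem w hw) (w' ∘ σ) (hmem w' hw')
  have hpair : ∀ v : Fin (n + 2) → Q,
      (v ∘ σ) ∘ Fin.castLE (by omega : 2 ≤ n + 2) = ![v i, v j] := by
    intro v
    funext k
    refine Fin.cases ?_ ?_ k
    · have h0 : Fin.castLE (by omega : 2 ≤ n + 2) (0 : Fin 2) = (0 : Fin (n + 2)) := by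
        apply Fin.ext; simp
      show v (σ (Fin.castLE _ (0 : Fin 2))) = _
      rw [h0, hσ0]; simp
    · intro i0
      have h1' : Fin.castLE (by omega : 2 ≤ n + 2) i0.succ = (1 : Fin (n + 2)) := by
        apply Fin.ext
        have : (i0 : ℕ) = 0 := by omega
        simp [Fin.val_succ, this]
      show v (σ (Fin.castLE _ i0.succ)) = ![v i, v j] i0.succ
      rw [h1', hσ1]
      have : i0 = 0 := by apply Fin.ext; omega
      rw [this]
      simp
  rw [hpair w] at h1
  rw [hpair w'] at h2
  exact ⟨E, hE, h1, h2⟩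

lemma PreScheme.repeat_eq (P : PreScheme Q t) {n : ℕ} (hn : n ≤ t)
    {C : Set (Fin (n + 2) → Q)} (hC : C ∈ P.Γ n)
    {w w' : Fin (n + 2) → Q} (hw : w ∈ C) (hw' : w' ∈ C)
    {i j : Fin (n + 2)} (h : w i = w j) : w' i = w' j := by
  by_cases hij : i = j
  · rw [hij]
  · obtain ⟨E, hE, h1, h2⟩ := P.pair hn hC hw hw' hij
    have hI : E = {x : Fin 2 → Q | x 0 = x 1} := by
      refine P.class_eq (by omega) hE P.identity h1 ?_
      show (![w i, w j]) 0 = (![w i, w j]) 1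
      simp [h]
    rw [hI] at h2
    have : (![w' i, w' j]) 0 = (![w' i, w' j]) 1 := h2
    simpa using this

end SchemeLemmas
section Restrict

variable {Q Q' : Type} [Fintype Q] [Fintype Q'] [Nonempty Q'] {t : ℕ}

/-- Restriction of a set of tuples along `g`. -/
def RSet (g : Q' → Q) {k : ℕ} (C : Set (Fin k → Q)) : Set (Fin k → Q') :=
  {x | g ∘ x ∈ C}

lemma cons_one' {α : Type} (a : α) (f : Fin 1 → α) : (Fin.cons a f : Fin 2 → α) 1 = f 0 := rfl

/-- Restriction of a presuperscheme to the image of a retract `g`. -/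
def restrictPre (P : PreScheme Q t) (f : Q → Q') (g : Q' → Q)
    (hfg : ∀ a, f (g a) = a)
    (hK : ∀ n ≤ t, ∀ C ∈ P.Γ n, ∀ w ∈ C, ∀ w' ∈ C, ∀ i j : Fin (n + 2),
      w i ∈ Set.range g → w j ∈ Set.range g → w' j ∈ Set.range g →
      w' i ∈ Set.range g) :
    PreScheme Q' t where
  Γ n := {S | ∃ C ∈ P.Γ n, S = RSet g C ∧ S.Nonempty}
  nonempty := by
    rintro n hn S ⟨C, hC, rfl, hne⟩
    exact hne
  partition := by
    intro n hn x
    obtain ⟨C, hC, hx⟩ := P.exists_class hn (g ∘ x)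
    refine ⟨RSet g C, ⟨⟨C, hC, rfl, ⟨x, hx⟩⟩, hx⟩, ?_⟩
    rintro S ⟨⟨C', hC', rfl, -⟩, hxS⟩
    have : C' = C := P.class_eq hn hC' hC hxS hx
    rw [this]
  identity := by
    have ginj : Function.Injective g := fun a b h => by
      have := congrArg f h; rwa [hfg, hfg] at this
    refine ⟨{x | x 0 = x 1}, P.identity, ?_, ?_⟩
    · ext x
      simp only [RSet, Set.mem_setOf_eq, Function.comp_apply]
      exact ⟨fun h => by rw [h], fun h => ginj h⟩
    · exact ⟨fun _ => Classical.arbitrary Q', rfl⟩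
  proj := by
    intro n hnt S hS
    obtain ⟨C, hC, rfl, ⟨v', hv'⟩⟩ := hS
    have hn : n ≤ t := by omega
    have hv' : g ∘ v' ∈ C := hv'
    have hPC : {y : Fin (n + 2) → Q | ∃ x ∈ C, y = x ∘ Fin.castSucc} ∈ P.Γ n :=
      P.proj n hnt C hC
    refine ⟨_, hPC, ?_, ⟨v' ∘ Fin.castSucc, ⟨v', hv', rfl⟩⟩⟩
    ext y
    constructor
    · rintro ⟨x, hx, rfl⟩
      exact ⟨g ∘ x, hx, rfl⟩
    · intro hy
      have hy : g ∘ y ∈ {y : Fin (n + 2) → Q | ∃ x ∈ C, y = x ∘ Fin.castSucc} := hy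
      have hinit : ∀ (q : Fin (n + 2) → Q) (a : Q), Fin.snoc q a ∘ Fin.castSucc = q := by
        intro q a; funext i; simp
      set v : Fin (n + 3) → Q := g ∘ v' with hvdef
      set vt : Fin (n + 2) → Q := v ∘ Fin.castSucc with hvtdef
      set u : Fin (n + 2) → Q := g ∘ y with hudef
      obtain ⟨D, hD, hsv⟩ := P.exists_class hnt (Fin.snoc vt (vt 0))
      have hvtPD : vt ∈ {y | ∃ x ∈ D, y = x ∘ Fin.castSucc} :=
        ⟨_, hsv, (hinit vt (vt 0)).symm⟩
      have hPD : {y : Fin (n + 2) → Q | ∃ x ∈ D, y = x ∘ Fin.castSucc} ∈ P.Γ n :=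
        P.proj n hnt D hD
      have hvtPC : vt ∈ {y : Fin (n + 2) → Q | ∃ x ∈ C, y = x ∘ Fin.castSucc} :=
        ⟨v, hv', rfl⟩
      have hPCeq : {y : Fin (n + 2) → Q | ∃ x ∈ C, y = x ∘ Fin.castSucc}
          = {y | ∃ x ∈ D, y = x ∘ Fin.castSucc} :=
        P.class_eq hn hPC hPD hvtPC hvtPD
      rw [hPCeq] at hy
      obtain ⟨wh, hwhD, huwh⟩ := hy
      have hsv0 : (Fin.snoc vt (vt 0) : Fin (n + 3) → Q) (0 : Fin (n + 3)) =
          (Fin.snoc vt (vt 0) : Fin (n + 3) → Q) (Fin.last (n + 2)) := by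
        have h1 : (Fin.snoc vt (vt 0) : Fin (n + 3) → Q) (Fin.last (n + 2)) = vt 0 := by simp
        have h2 : (Fin.snoc vt (vt 0) : Fin (n + 3) → Q) (0 : Fin (n + 3)) = vt 0 := by
          rw [show (0 : Fin (n + 3)) = Fin.castSucc (0 : Fin (n + 2)) by simp]
          exact Fin.snoc_castSucc _ _ _
        rw [h1, h2]
      have hwh0 : wh 0 = wh (Fin.last (n + 2)) := P.repeat_eq hnt hD hsv hwhD hsv0
      have hu0 : u 0 = wh 0 := by
        rw [huwh]; show wh (Fin.castSucc 0) = wh 0; rw [Fin.castSucc_zero]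
      have hwheq : wh = Fin.snoc u (u 0) := by
        funext k
        refine Fin.lastCases ?_ ?_ k
        · rw [Fin.snoc_last, hu0]; exact hwh0.symm
        · intro i
          rw [Fin.snoc_castSucc, huwh]
          rfl
      have hsuD : Fin.snoc u (u 0) ∈ D := hwheq ▸ hwhD
      obtain ⟨Cj, hCj, hptCj⟩ := P.exists_class (show 0 ≤ t by omega)
        (Fin.cons (v (Fin.last (n + 2))) (fun _ => vt 0) : Fin 2 → Q)
      have hfst : ∀ (q : Fin (n + 2) → Q) (a z : Q),
          fstTup (n + 1) 0 (Fin.snoc q a) z = Fin.snoc q z := by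
        intro q a z
        rw [fstTup_zero, Fin.init_snoc]
      have hsnd : ∀ (q : Fin (n + 2) → Q) (a z : Q),
          sndTup (n + 1) 0 (Fin.snoc q a) z = Fin.cons z (fun _ => a) := by
        intro q a z
        rw [sndTup_zero, Fin.snoc_last]
      have hinter := P.inter (n + 1) 0 (by omega) C hC Cj hCj D hD
        (Fin.snoc u (u 0)) hsuD (Fin.snoc vt (vt 0)) hsv
      have hvsnoc : Fin.snoc vt (v (Fin.last (n + 2))) = v := by
        funext k
        refine Fin.lastCases ?_ ?_ k
        · rw [Fin.snoc_last]
        · intro i; rw [Fin.snoc_castSucc]; rfl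
      have hA2 : {z : Q | fstTup (n + 1) 0 (Fin.snoc vt (vt 0)) z ∈ C ∧
          sndTup (n + 1) 0 (Fin.snoc vt (vt 0)) z ∈ Cj}.Nonempty := by
        refine ⟨v (Fin.last (n + 2)), ?_, ?_⟩
        · rw [hfst, hvsnoc]; exact hv'
        · rw [hsnd]; exact hptCj
      have hpos : ({z : Q | fstTup (n + 1) 0 (Fin.snoc u (u 0)) z ∈ C ∧
          sndTup (n + 1) 0 (Fin.snoc u (u 0)) z ∈ Cj}).Nonempty := by
        rw [← Set.ncard_pos (Set.toFinite _), hinter,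
          Set.ncard_pos (Set.toFinite _)]
        exact hA2
      obtain ⟨z, hz1, hz2⟩ := hpos
      rw [hfst] at hz1
      rw [hsnd] at hz2
      have hzr : z ∈ Set.range g := by
        have := hK 0 (by omega) Cj hCj _ hptCj _ hz2 0 1
          ⟨v' (Fin.last (n + 2)), rfl⟩
          (by rw [cons_one']; exact ⟨v' (Fin.castSucc 0), rfl⟩)
          (by rw [cons_one']; exact ⟨y 0, rfl⟩)
        rwa [Fin.cons_zero] at this
      obtain ⟨b, hb⟩ := hzr
      refine ⟨Fin.snoc y b, ?_, ?_⟩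
      · show g ∘ Fin.snoc y b ∈ C
        rw [Fin.comp_snoc, hb]
        exact hz1
      · funext i
        simp
  invariant := by
    rintro n hn S ⟨C, hC, rfl, ⟨x₀, hx₀⟩⟩ τ
    refine ⟨{x | x ∘ τ ∈ C}, P.invariant n hn C hC τ, rfl, ?_⟩
    refine ⟨x₀ ∘ τ.symm, ?_⟩
    show (g ∘ (x₀ ∘ ⇑τ.symm)) ∘ ⇑τ ∈ C
    have heq : (g ∘ (x₀ ∘ ⇑τ.symm)) ∘ ⇑τ = g ∘ x₀ := by
      funext i; simp
    rw [heq]; exact hx₀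
  inter := by
    intro m n hmn Si hSi Sj hSj Sk hSk w hw w' hw'
    obtain ⟨Ci, hCi, rfl, ⟨vi, hvi⟩⟩ := hSi
    obtain ⟨Cj, hCj, rfl, -⟩ := hSj
    obtain ⟨Ck, hCk, rfl, -⟩ := hSk
    have ginj : Function.Injective g := fun a b h => by
      have := congrArg f h; rwa [hfg, hfg] at this
    have hvi : g ∘ vi ∈ Ci := hvi
    have key : ∀ x : Fin (m + n + 2) → Q',
        {z : Q' | fstTup m n x z ∈ RSet g Ci ∧ sndTup m n x z ∈ RSet g Cj}.ncard =
        {zh : Q | fstTup m n (g ∘ x) zh ∈ Ci ∧ sndTup m n (g ∘ x) zh ∈ Cj}.ncard := by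
      intro x
      rw [← Set.ncard_image_of_injective _ ginj]
      congr 1
      ext zh
      constructor
      · rintro ⟨z, ⟨h1, h2⟩, rfl⟩
        constructor
        · rw [← comp_fstTup]; exact h1
        · rw [← comp_sndTup]; exact h2
      · rintro ⟨h1, h2⟩
        have hzh : zh ∈ Set.range g := by
          have := hK m (by omega) Ci hCi (g ∘ vi) hvi _ h1 (Fin.last (m + 1)) 0
            ⟨vi (Fin.last (m + 1)), rfl⟩ ⟨vi 0, rfl⟩
            (by rw [fstTup_apply_zero]; exact ⟨x 0, rfl⟩)
          rwa [fstTup_apply_last] at this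
        obtain ⟨z, rfl⟩ := hzh
        refine ⟨z, ⟨?_, ?_⟩, rfl⟩
        · show g ∘ fstTup m n x z ∈ Ci
          rw [comp_fstTup]; exact h1
        · show g ∘ sndTup m n x z ∈ Cj
          rw [comp_sndTup]; exact h2
    rw [key w, key w']
    exact P.inter m n hmn Ci hCi Cj hCj Ck hCk (g ∘ w) hw (g ∘ w') hw'

end Restrict
section Tensor

variable {Q₁ Q₂ : Type} [Fintype Q₁] [Fintype Q₂] {t : ℕ}

/-- Product of two sets of tuples. -/
def prodSet {k : ℕ} (C : Set (Fin k → Q₁)) (D : Set (Fin k → Q₂)) :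
    Set (Fin k → Q₁ × Q₂) :=
  {x | Prod.fst ∘ x ∈ C ∧ Prod.snd ∘ x ∈ D}

/-- Tensor product of two presuperschemes. -/
def tensorPre (P₁ : PreScheme Q₁ t) (P₂ : PreScheme Q₂ t) :
    PreScheme (Q₁ × Q₂) t where
  Γ n := {E | ∃ C ∈ P₁.Γ n, ∃ D ∈ P₂.Γ n, E = prodSet C D}
  nonempty := by
    rintro n hn E ⟨C, hC, D, hD, rfl⟩
    obtain ⟨x₁, hx₁⟩ := P₁.nonempty n hn C hC
    obtain ⟨x₂, hx₂⟩ := P₂.nonempty n hn D hD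
    exact ⟨fun i => (x₁ i, x₂ i), hx₁, hx₂⟩
  partition := by
    intro n hn x
    obtain ⟨C, hC, h1⟩ := P₁.exists_class hn (Prod.fst ∘ x)
    obtain ⟨D, hD, h2⟩ := P₂.exists_class hn (Prod.snd ∘ x)
    refine ⟨prodSet C D, ⟨⟨C, hC, D, hD, rfl⟩, h1, h2⟩, ?_⟩
    rintro E ⟨⟨C', hC', D', hD', rfl⟩, hx1, hx2⟩
    rw [P₁.class_eq hn hC' hC hx1 h1, P₂.class_eq hn hD' hD hx2 h2]
  identity := by
    refine ⟨_, P₁.identity, _, P₂.identity, ?_⟩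
    ext x
    simp only [prodSet, Set.mem_setOf_eq, Function.comp_apply]
    constructor
    · intro h; constructor <;> rw [h]
    · rintro ⟨h1, h2⟩; exact Prod.ext_iff.mpr ⟨h1, h2⟩
  proj := by
    rintro n hnt E ⟨C, hC, D, hD, rfl⟩
    refine ⟨_, P₁.proj n hnt C hC, _, P₂.proj n hnt D hD, ?_⟩
    ext y
    constructor
    · rintro ⟨x, ⟨hx1, hx2⟩, rfl⟩
      exact ⟨⟨Prod.fst ∘ x, hx1, rfl⟩, ⟨Prod.snd ∘ x, hx2, rfl⟩⟩
    · rintro ⟨⟨x₁, hx₁, hy1⟩, ⟨x₂, hx₂, hy2⟩⟩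
      refine ⟨fun i => (x₁ i, x₂ i), ⟨hx₁, hx₂⟩, ?_⟩
      funext i
      have e1 : (y i).1 = x₁ (Fin.castSucc i) := congrFun hy1 i
      have e2 : (y i).2 = x₂ (Fin.castSucc i) := congrFun hy2 i
      exact Prod.ext_iff.mpr ⟨e1, e2⟩
  invariant := by
    rintro n hn E ⟨C, hC, D, hD, rfl⟩ τ
    exact ⟨_, P₁.invariant n hn C hC τ, _, P₂.invariant n hn D hD τ, rfl⟩
  inter := by
    intro m n hmn Ei hEi Ej hEj Ek hEk w hw w' hw'
    obtain ⟨Ci1, hCi1, Ci2, hCi2, rfl⟩ := hEi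
    obtain ⟨Cj1, hCj1, Cj2, hCj2, rfl⟩ := hEj
    obtain ⟨Ck1, hCk1, Ck2, hCk2, rfl⟩ := hEk
    obtain ⟨hw1, hw2⟩ := hw
    obtain ⟨hw'1, hw'2⟩ := hw'
    have key : ∀ v : Fin (m + n + 2) → Q₁ × Q₂,
        {z : Q₁ × Q₂ | fstTup m n v z ∈ prodSet Ci1 Ci2 ∧
            sndTup m n v z ∈ prodSet Cj1 Cj2} =
        {a : Q₁ | fstTup m n (Prod.fst ∘ v) a ∈ Ci1 ∧
            sndTup m n (Prod.fst ∘ v) a ∈ Cj1} ×ˢ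
        {b : Q₂ | fstTup m n (Prod.snd ∘ v) b ∈ Ci2 ∧
            sndTup m n (Prod.snd ∘ v) b ∈ Cj2} := by
      intro v
      ext z
      simp only [prodSet, Set.mem_setOf_eq, Set.mem_prod]
      rw [← comp_fstTup Prod.fst, ← comp_fstTup Prod.snd,
        ← comp_sndTup Prod.fst, ← comp_sndTup Prod.snd]
      tauto
    rw [key w, key w', ncard_sprod, ncard_sprod,
      P₁.inter m n hmn Ci1 hCi1 Cj1 hCj1 Ck1 hCk1 _ hw1 _ hw'1,
      P₂.inter m n hmn Ci2 hCi2 Cj2 hCj2 Ck2 hCk2 _ hw2 _ hw'2]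

end Tensor
section Main

variable {Q₁ Q₂ : Type} [Fintype Q₁] [Fintype Q₂] {t : ℕ}

lemma hK_snd {Γ₁ : Set (Set (Q₁ × Q₁))} {Γ₂ : Set (Set (Q₂ × Q₂))}
    (h₂ : IsAssocScheme Q₂ Γ₂) (P : PreScheme (Q₁ × Q₂) t)
    (hP0 : P.Γ 0 = pairsToFun '' tensorΓ Γ₁ Γ₂) :
    ∀ n ≤ t, ∀ C ∈ P.Γ n, ∀ w ∈ C, ∀ w' ∈ C, ∀ i j : Fin (n + 2),
      (w i).2 = (w j).2 → (w' i).2 = (w' j).2 := by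
  intro n hn C hC w hw w' hw' i j hij2
  by_cases hij : i = j
  · rw [hij]
  · obtain ⟨E, hE, h1, h2⟩ := P.pair hn hC hw hw' hij
    rw [hP0] at hE
    obtain ⟨S, hS, rfl⟩ := hE
    obtain ⟨C', hC', D', hD', rfl⟩ := hS
    simp only [pairsToFun, Set.mem_setOf_eq, Matrix.cons_val_zero,
      Matrix.cons_val_one, Matrix.head_cons] at h1 h2
    have hD'diag : D' = {p : Q₂ × Q₂ | p.1 = p.2} := by
      obtain ⟨U, hU, huniq⟩ := h₂.2.1 ((w i).2, (w j).2)
      rw [huniq D' ⟨hD', h1.2⟩, huniq {p : Q₂ × Q₂ | p.1 = p.2} ⟨h₂.2.2.1, hij2⟩]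
    rw [hD'diag] at h2
    exact h2.2

lemma hK_fst {Γ₁ : Set (Set (Q₁ × Q₁))} {Γ₂ : Set (Set (Q₂ × Q₂))}
    (h₁ : IsAssocScheme Q₁ Γ₁) (P : PreScheme (Q₁ × Q₂) t)
    (hP0 : P.Γ 0 = pairsToFun '' tensorΓ Γ₁ Γ₂) :
    ∀ n ≤ t, ∀ C ∈ P.Γ n, ∀ w ∈ C, ∀ w' ∈ C, ∀ i j : Fin (n + 2),
      (w i).1 = (w j).1 → (w' i).1 = (w' j).1 := by
  intro n hn C hC w hw w' hw' i j hij1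
  by_cases hij : i = j
  · rw [hij]
  · obtain ⟨E, hE, h1, h2⟩ := P.pair hn hC hw hw' hij
    rw [hP0] at hE
    obtain ⟨S, hS, rfl⟩ := hE
    obtain ⟨C', hC', D', hD', rfl⟩ := hS
    simp only [pairsToFun, Set.mem_setOf_eq, Matrix.cons_val_zero,
      Matrix.cons_val_one, Matrix.head_cons] at h1 h2
    have hC'diag : C' = {p : Q₁ × Q₁ | p.1 = p.2} := by
      obtain ⟨U, hU, huniq⟩ := h₁.2.1 ((w i).1, (w j).1)
      rw [huniq C' ⟨hC', h1.1⟩, huniq {p : Q₁ × Q₁ | p.1 = p.2} ⟨h₁.2.2.1, hij1⟩]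
    rw [hC'diag] at h2
    exact h2.1

end Main
/-- the tensor product of two association schemes is extensible
to height `t` iff both factors are extensible to height `t`. -/
theorem stmt_8 {Q₁ Q₂ : Type} [Fintype Q₁] [Fintype Q₂]
    [Nonempty Q₁] [Nonempty Q₂]
    (Γ₁ : Set (Set (Q₁ × Q₁))) (Γ₂ : Set (Set (Q₂ × Q₂)))
    (h₁ : IsAssocScheme Q₁ Γ₁) (h₂ : IsAssocScheme Q₂ Γ₂) (t : ℕ) :
    Extensible (Q₁ × Q₂) (tensorΓ Γ₁ Γ₂) t ↔
      Extensible Q₁ Γ₁ t ∧ Extensible Q₂ Γ₂ t := by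
  obtain ⟨q1⟩ := (inferInstance : Nonempty Q₁)
  obtain ⟨q2⟩ := (inferInstance : Nonempty Q₂)
  constructor
  · rintro ⟨P, hP0⟩
    constructor
    · -- first factor
      set g : Q₁ → Q₁ × Q₂ := fun a => (a, q2) with hg
      have hr : ∀ q : Q₁ × Q₂, q ∈ Set.range g ↔ q.2 = q2 := by
        intro q
        constructor
        · rintro ⟨a, rfl⟩; rfl
        · intro h; exact ⟨q.1, Prod.ext_iff.mpr ⟨rfl, h.symm⟩⟩
      have hK : ∀ n ≤ t, ∀ C ∈ P.Γ n, ∀ w ∈ C, ∀ w' ∈ C, ∀ i j : Fin (n + 2),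
          w i ∈ Set.range g → w j ∈ Set.range g → w' j ∈ Set.range g →
          w' i ∈ Set.range g := by
        intro n hn C hC w hw w' hw' i j hi hj h'j
        have h2 := hK_snd h₂ P hP0 n hn C hC w hw w' hw' i j
          (((hr _).mp hi).trans ((hr _).mp hj).symm)
        rw [hr] at h'j ⊢
        rw [h2, h'j]
      refine ⟨restrictPre P Prod.fst g (fun a => rfl) hK, ?_⟩
      have hΓ : (restrictPre P Prod.fst g (fun a => rfl) hK).Γ 0
          = {S | ∃ C ∈ P.Γ 0, S = RSet g C ∧ S.Nonempty} := rfl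
      rw [hΓ]
      ext T
      constructor
      · rintro ⟨C, hC, rfl, hne⟩
        rw [hP0] at hC
        obtain ⟨S, hS, rfl⟩ := hC
        obtain ⟨C', hC', D', hD', rfl⟩ := hS
        obtain ⟨x₀, hx₀⟩ := hne
        have hx₀' : (x₀ 0, x₀ 1) ∈ C' ∧ (q2, q2) ∈ D' := hx₀
        refine ⟨C', hC', ?_⟩
        ext x
        exact ⟨fun h => ⟨h, hx₀'.2⟩, fun h => h.1⟩
      · rintro ⟨C', hC', rfl⟩
        obtain ⟨D', ⟨hD', hq⟩, -⟩ := h₂.2.1 (q2, q2)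
        refine ⟨pairsToFun {p | (p.1.1, p.2.1) ∈ C' ∧ (p.1.2, p.2.2) ∈ D'},
          by rw [hP0]; exact ⟨_, ⟨C', hC', D', hD', rfl⟩, rfl⟩, ?_, ?_⟩
        · ext x
          constructor
          · intro h
            exact ⟨h, hq⟩
          · intro h
            exact h.1
        · obtain ⟨p, hp⟩ := h₁.1 C' hC'
          exact ⟨![p.1, p.2], by simpa [pairsToFun] using hp⟩
    · -- second factor
      set g : Q₂ → Q₁ × Q₂ := fun b => (q1, b) with hg
      have hr : ∀ q : Q₁ × Q₂, q ∈ Set.range g ↔ q.1 = q1 := by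
        intro q
        constructor
        · rintro ⟨a, rfl⟩; rfl
        · intro h; exact ⟨q.2, Prod.ext_iff.mpr ⟨h.symm, rfl⟩⟩
      have hK : ∀ n ≤ t, ∀ C ∈ P.Γ n, ∀ w ∈ C, ∀ w' ∈ C, ∀ i j : Fin (n + 2),
          w i ∈ Set.range g → w j ∈ Set.range g → w' j ∈ Set.range g →
          w' i ∈ Set.range g := by
        intro n hn C hC w hw w' hw' i j hi hj h'j
        have h2 := hK_fst h₁ P hP0 n hn C hC w hw w' hw' i j
          (((hr _).mp hi).trans ((hr _).mp hj).symm)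
        rw [hr] at h'j ⊢
        rw [h2, h'j]
      refine ⟨restrictPre P Prod.snd g (fun a => rfl) hK, ?_⟩
      have hΓ : (restrictPre P Prod.snd g (fun a => rfl) hK).Γ 0
          = {S | ∃ C ∈ P.Γ 0, S = RSet g C ∧ S.Nonempty} := rfl
      rw [hΓ]
      ext T
      constructor
      · rintro ⟨C, hC, rfl, hne⟩
        rw [hP0] at hC
        obtain ⟨S, hS, rfl⟩ := hC
        obtain ⟨C', hC', D', hD', rfl⟩ := hS
        obtain ⟨x₀, hx₀⟩ := hne
        have hx₀' : (q1, q1) ∈ C' ∧ (x₀ 0, x₀ 1) ∈ D' := hx₀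
        refine ⟨D', hD', ?_⟩
        ext x
        exact ⟨fun h => ⟨hx₀'.1, h⟩, fun h => h.2⟩
      · rintro ⟨D', hD', rfl⟩
        obtain ⟨C', ⟨hC', hq⟩, -⟩ := h₁.2.1 (q1, q1)
        refine ⟨pairsToFun {p | (p.1.1, p.2.1) ∈ C' ∧ (p.1.2, p.2.2) ∈ D'},
          by rw [hP0]; exact ⟨_, ⟨C', hC', D', hD', rfl⟩, rfl⟩, ?_, ?_⟩
        · ext x
          constructor
          · intro h
            exact ⟨hq, h⟩
          · intro h
            exact h.2
        · obtain ⟨p, hp⟩ := h₂.1 D' hD'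
          exact ⟨![p.1, p.2], by simpa [pairsToFun] using hp⟩
  · rintro ⟨⟨P₁, h1⟩, ⟨P₂, h2⟩⟩
    refine ⟨tensorPre P₁ P₂, ?_⟩
    have hΓ : (tensorPre P₁ P₂).Γ 0
        = {E | ∃ C ∈ P₁.Γ 0, ∃ D ∈ P₂.Γ 0, E = prodSet C D} := rfl
    rw [hΓ, h1, h2]
    ext E
    constructor
    · rintro ⟨C, ⟨C', hC', rfl⟩, D, ⟨D', hD', rfl⟩, rfl⟩
      refine ⟨_, ⟨C', hC', D', hD', rfl⟩, ?_⟩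
      ext x
      exact ⟨fun h => ⟨h.1, h.2⟩, fun h => ⟨h.1, h.2⟩⟩
    · rintro ⟨S, ⟨C', hC', D', hD', rfl⟩, rfl⟩
      refine ⟨pairsToFun C', ⟨C', hC', rfl⟩, pairsToFun D', ⟨D', hD', rfl⟩, ?_⟩
      ext x
      exact ⟨fun h => ⟨h.1, h.2⟩, fun h => ⟨h.1, h.2⟩⟩
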